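/- For α ∈ (0, 1/2) and all u, v ∈ (0, ∞) with u ≠ v, one has (uv)^α / B(1−2α, α) · ∫_0^{u∧v} y^{−2α} (u−y)^{α−1} (v−y)^{α−1} dy = |u−v|^{2α−1}, where B denotes the Beta function. -/

import Mathlib

open MeasureTheory Set Real
open scoped ENNReal

/-- Euler Beta function `B(a,b) = ∫_0^1 t^(a-1) (1-t)^(b-1) dt`. -/
noncomputable def betaFn (a b : ℝ) : ℝ :=
  ∫ t in Ioc (0:ℝ) 1, t ^ (a - 1) * (1 - t) ^ (b - 1)

lemma beta_integrableOn {a b : ℝ} (ha : 0 < a) (hb : 0 < b) :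
    IntegrableOn (fun t : ℝ => t ^ (a - 1) * (1 - t) ^ (b - 1)) (Ioo 0 1) := by
  have h := (Complex.betaIntegral_convergent (u := (a:ℂ)) (v := (b:ℂ))
    (by simpa using ha) (by simpa using hb)).norm
  rw [intervalIntegrable_iff_integrableOn_Ioo_of_le zero_le_one] at h
  refine h.congr_fun (fun x hx => ?_) measurableSet_Ioo
  have hx0 : (0:ℝ) < x := hx.1
  have hx1 : (0:ℝ) < 1 - x := by linarith [hx.2]
  have h1 : (1 - (x:ℂ)) = ((1 - x : ℝ) : ℂ) := by push_cast; ring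
  beta_reduce
  rw [norm_mul, h1,
    Complex.norm_cpow_eq_rpow_re_of_pos hx0, Complex.norm_cpow_eq_rpow_re_of_pos hx1]
  simp

lemma betaFn_pos {a b : ℝ} (ha : 0 < a) (hb : 0 < b) : 0 < betaFn a b := by
  rw [betaFn, integral_Ioc_eq_integral_Ioo]
  have hpos : ∀ x ∈ Ioo (0:ℝ) 1, 0 < x ^ (a - 1) * (1 - x) ^ (b - 1) := by
    intro x hx
    have hx0 : (0:ℝ) < x := hx.1
    have hx1 : (0:ℝ) < 1 - x := by linarith [hx.2]
    positivity
  rw [setIntegral_pos_iff_support_of_nonneg_ae]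
  · refine lt_of_lt_of_le ?_ (measure_mono (fun x hx =>
      ⟨(hpos x hx).ne', hx⟩ : Ioo (0:ℝ) 1 ⊆ Function.support _ ∩ Ioo 0 1))
    simp [Real.volume_Ioo]
  · filter_upwards [ae_restrict_mem measurableSet_Ioo] with x hx using (hpos x hx).le
  · exact beta_integrableOn ha hb

lemma key_integral (α : ℝ) (hα : α ∈ Ioo (0:ℝ) (1/2)) (u v : ℝ) (hu : 0 < u)
    (huv : u < v) :
    (∫ y in Ioc (0:ℝ) u, y ^ (-(2 * α)) * (u - y) ^ (α - 1) * (v - y) ^ (α - 1))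
      = (u * v) ^ (-α) * (v - u) ^ (2 * α - 1) * betaFn (1 - 2 * α) α := by
  obtain ⟨hα0, hα2⟩ := hα
  have hv : 0 < v := hu.trans huv
  have hvu : 0 < v - u := sub_pos.mpr huv
  set φ : ℝ → ℝ := fun s => u * v * s / (v - u + u * s) with hφ
  set ψ : ℝ → ℝ := fun s => u * v * (v - u) / (v - u + u * s) ^ 2 with hψ
  have hD : ∀ s ∈ Ioo (0:ℝ) 1, 0 < v - u + u * s := by
    intro s hs; nlinarith [hs.1]
  have himg : φ '' Ioo 0 1 = Ioo 0 u := by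
    ext y
    constructor
    · rintro ⟨s, hs, rfl⟩
      have hDs := hD s hs
      have hs0 := hs.1
      refine ⟨by positivity, ?_⟩
      rw [hφ]
      simp only
      rw [div_lt_iff₀ hDs]
      nlinarith [mul_pos hu hvu, mul_lt_mul_of_pos_left hs.2 (mul_pos hu hvu)]
    · intro hy
      have hy0 := hy.1
      have hyu := hy.2
      have hvy : 0 < v - y := by linarith
      refine ⟨y * (v - u) / (u * (v - y)), ⟨by positivity, ?_⟩, ?_⟩
      · rw [div_lt_one (by positivity)]
        nlinarith
      · rw [hφ]
        simp only
        rw [div_eq_iff]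
        · field_simp
          ring
        · have h1 : v - u + u * (y * (v - u) / (u * (v - y))) = (v - u) * v / (v - y) := by
            field_simp
            ring
          rw [h1]
          positivity
  have hderiv : ∀ s ∈ Ioo (0:ℝ) 1, HasDerivWithinAt φ (ψ s) (Ioo 0 1) s := by
    intro s hs
    have hDs := hD s hs
    have h1 : HasDerivAt (fun s : ℝ => u * v * s) (u * v) s := by
      simpa using (hasDerivAt_id s).const_mul (u * v)
    have h2 : HasDerivAt (fun s : ℝ => v - u + u * s) u s := by
      simpa using ((hasDerivAt_id s).const_mul u).const_add (v - u)
    have h3 := h1.div h2 hDs.ne'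
    have h4 : (u * v * (v - u + u * s) - u * v * s * u) / (v - u + u * s) ^ 2 = ψ s := by
      rw [hψ]; ring_nf
    rw [← h4]
    exact h3.hasDerivWithinAt
  have hinj : InjOn φ (Ioo 0 1) := by
    intro s1 h1 s2 h2 he
    have hD1 := hD s1 h1
    have hD2 := hD s2 h2
    rw [hφ] at he
    simp only at he
    rw [div_eq_div_iff hD1.ne' hD2.ne'] at he
    have h3 : u * v * (v - u) * (s1 - s2) = 0 := by linear_combination he
    have h4 : u * v * (v - u) ≠ 0 := by positivity
    have := mul_eq_zero.mp h3
    rcases this with h | h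
    · exact absurd h h4
    · linarith [sub_eq_zero.mp h]
  rw [integral_Ioc_eq_integral_Ioo, ← himg,
    integral_image_eq_integral_abs_deriv_smul measurableSet_Ioo hderiv hinj,
    betaFn, integral_Ioc_eq_integral_Ioo, ← integral_const_mul]
  refine setIntegral_congr_fun measurableSet_Ioo (fun s hs => ?_)
  have hs0 : (0:ℝ) < s := hs.1
  have hs1 : (0:ℝ) < 1 - s := by linarith [hs.2]
  have hDs := hD s hs
  set D := v - u + u * s with hDdef
  have e1 : u - u * v * s / D = u * (v - u) * (1 - s) / D := by
    field_simp
    ring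
  have e2 : v - u * v * s / D = v * (v - u) / D := by
    field_simp
    ring
  rw [hφ, hψ]
  simp only [smul_eq_mul]
  rw [e1, e2, abs_of_pos (by positivity)]
  have p1 : (0:ℝ) < u * v * s / D := by positivity
  have p2 : (0:ℝ) < u * (v - u) * (1 - s) / D := by positivity
  have p3 : (0:ℝ) < v * (v - u) / D := by positivity
  have p4 : (0:ℝ) < u * v := by positivity
  have L0 : Real.log (u * v * (v - u) / D ^ 2)
      = Real.log u + Real.log v + Real.log (v - u) - 2 * Real.log D := by
    rw [Real.log_div (by positivity) (by positivity), Real.log_pow,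
      Real.log_mul (by positivity) hvu.ne', Real.log_mul hu.ne' hv.ne']
    push_cast; ring
  have L1 : Real.log (u * v * s / D)
      = Real.log u + Real.log v + Real.log s - Real.log D := by
    rw [Real.log_div (by positivity) hDs.ne', Real.log_mul (by positivity) hs0.ne',
      Real.log_mul hu.ne' hv.ne']
  have L2 : Real.log (u * (v - u) * (1 - s) / D)
      = Real.log u + Real.log (v - u) + Real.log (1 - s) - Real.log D := by
    rw [Real.log_div (by positivity) hDs.ne', Real.log_mul (by positivity) hs1.ne',
      Real.log_mul hu.ne' hvu.ne']
  have L3 : Real.log (v * (v - u) / D)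
      = Real.log v + Real.log (v - u) - Real.log D := by
    rw [Real.log_div (by positivity) hDs.ne', Real.log_mul hv.ne' hvu.ne']
  rw [show u * v * (v - u) / D ^ 2 = Real.exp (Real.log (u * v * (v - u) / D ^ 2)) from
      (Real.exp_log (by positivity)).symm,
    Real.rpow_def_of_pos p1, Real.rpow_def_of_pos p2, Real.rpow_def_of_pos p3,
    Real.rpow_def_of_pos p4, Real.rpow_def_of_pos hvu, Real.rpow_def_of_pos hs0,
    Real.rpow_def_of_pos hs1]
  rw [← Real.exp_add, ← Real.exp_add, ← Real.exp_add, ← Real.exp_add, ← Real.exp_add,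
    ← Real.exp_add]
  rw [L0, L1, L2, L3]
  congr 1
  rw [Real.log_mul hu.ne' hv.ne']
  ring

/-- the key Beta-function integral identity. -/
theorem stmt2 (α : ℝ) (hα : α ∈ Ioo (0:ℝ) (1/2)) (u v : ℝ) (hu : 0 < u) (hv : 0 < v)
    (huv : u ≠ v) :
    (u * v) ^ α / betaFn (1 - 2 * α) α *
      ∫ y in Ioc (0:ℝ) (min u v), y ^ (-(2 * α)) * (u - y) ^ (α - 1) * (v - y) ^ (α - 1)
      = |u - v| ^ (2 * α - 1) := by
  have hB : 0 < betaFn (1 - 2 * α) α := betaFn_pos (by linarith [hα.2]) hα.1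
  have huv2 : (0:ℝ) < u * v := by positivity
  have hcancel : (u * v) ^ α * (u * v) ^ (-α) = 1 := by
    rw [← Real.rpow_add huv2]; simp
  rcases lt_or_gt_of_ne huv with h | h
  · rw [min_eq_left h.le, key_integral α hα u v hu h, abs_sub_comm,
      abs_of_pos (by linarith)]
    field_simp
    linear_combination hcancel
  · have hsymm : ∀ y : ℝ, y ^ (-(2 * α)) * (u - y) ^ (α - 1) * (v - y) ^ (α - 1)
        = y ^ (-(2 * α)) * (v - y) ^ (α - 1) * (u - y) ^ (α - 1) := fun y => by ring
    simp only [hsymm]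
    rw [min_eq_right h.le, key_integral α hα v u hv h, abs_of_pos (by linarith),
      mul_comm v u]
    field_simp
    linear_combination hcancel
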